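/- If an FT3S system is FT2S strongly hyperbolic, then it is FT3S strongly hyperbolic. Precisely: if for some choice of reduction parameters there exist M2 > 0 and, for each unit vector s in R^3, a Hermitian matrix H2(s) with H2(s)P2(s) = P2(s)*H2(s) and M2^{-1} I <= H2(s) <= M2 I, then there exist M3 > 0 and, for each unit s, a Hermitian matrix H3(s) with H3(s)P3(s) = P3(s)*H3(s) and M3^{-1} I <= H3(s) <= M3 I; one may take M3 = M2 and H3(s) equal to the diagonal block of H2(s) corresponding to the components (s^a d_a, v, w) after the orthogonal change of variables splitting d_a into its components parallel and orthogonal to s. -/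

import Mathlib

open Matrix
open scoped ComplexOrder

/-- The Loewner order `A ≤ B` for complex matrices: `B - A` is positive semidefinite. -/
def loewnerLE {n : Type*} [Fintype n] (A B : Matrix n n ℂ) : Prop := (B - A).PosSemidef

/-- Index type for the FT3S state `(u, v, w)`. -/
abbrev I3 (nu nv nw : ℕ) : Type := Fin nu ⊕ (Fin nv ⊕ Fin nw)

/-- Index type for the FT2S reduction state `(u, d_a, v, w)`. -/
abbrev I2 (nu nv nw : ℕ) : Type := Fin nu ⊕ ((Fin 3 × Fin nu) ⊕ (Fin nv ⊕ Fin nw))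

variable {nu nv nw : ℕ}
  (Auu : Fin 3 → Matrix (Fin nu) (Fin nu) ℂ) (Auv : Matrix (Fin nu) (Fin nv) ℂ)
  (Bu1u : Matrix (Fin nu) (Fin nu) ℂ)
  (Avu : Fin 3 → Fin 3 → Matrix (Fin nv) (Fin nu) ℂ)
  (Avv : Fin 3 → Matrix (Fin nv) (Fin nv) ℂ)
  (Avw : Matrix (Fin nv) (Fin nw) ℂ) (Bv1u : Fin 3 → Matrix (Fin nv) (Fin nu) ℂ)
  (Awu : Fin 3 → Fin 3 → Fin 3 → Matrix (Fin nw) (Fin nu) ℂ)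
  (Awv : Fin 3 → Fin 3 → Matrix (Fin nw) (Fin nv) ℂ)
  (Aww : Fin 3 → Matrix (Fin nw) (Fin nw) ℂ)
  (Bw1u : Fin 3 → Fin 3 → Matrix (Fin nw) (Fin nu) ℂ)
  (Du : Fin 3 → Matrix (Fin nu) (Fin nu) ℂ)
  (Dbaru : Fin 3 → Fin 3 → Matrix (Fin nu) (Fin nu) ℂ)
  (DD : Fin 3 → Fin 3 → Matrix (Fin nu) (Fin nu) ℂ)
  (Dbar : Fin 3 → Fin 3 → Fin 3 → Matrix (Fin nu) (Fin nu) ℂ)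
  (Dv : Fin 3 → Matrix (Fin nv) (Fin nu) ℂ)
  (Dbarv : Fin 3 → Fin 3 → Matrix (Fin nv) (Fin nu) ℂ)
  (Dw : Fin 3 → Fin 3 → Matrix (Fin nw) (Fin nu) ℂ)
  (Dbarw : Fin 3 → Fin 3 → Fin 3 → Matrix (Fin nw) (Fin nu) ℂ)

/-- The FT3S principal symbol `P₃(s)`. -/
noncomputable def P3 (s : Fin 3 → ℝ) : Matrix (I3 nu nv nw) (I3 nu nv nw) ℂ :=
  Matrix.of fun r c =>
    match r, c with
    | Sum.inl m, Sum.inl m' => ∑ i, (s i : ℂ) * Auu i m m'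
    | Sum.inl m, Sum.inr (Sum.inl q) => Auv m q
    | Sum.inl _, Sum.inr (Sum.inr _) => 0
    | Sum.inr (Sum.inl p), Sum.inl m' => ∑ i, ∑ j, (s i : ℂ) * (s j : ℂ) * Avu i j p m'
    | Sum.inr (Sum.inl p), Sum.inr (Sum.inl q) => ∑ i, (s i : ℂ) * Avv i p q
    | Sum.inr (Sum.inl p), Sum.inr (Sum.inr t) => Avw p t
    | Sum.inr (Sum.inr t), Sum.inl m' =>
        ∑ i, ∑ j, ∑ k, (s i : ℂ) * (s j : ℂ) * (s k : ℂ) * Awu i j k t m'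
    | Sum.inr (Sum.inr t), Sum.inr (Sum.inl q) =>
        ∑ i, ∑ j, (s i : ℂ) * (s j : ℂ) * Awv i j t q
    | Sum.inr (Sum.inr t), Sum.inr (Sum.inr t') => ∑ i, (s i : ℂ) * Aww i t t'

/-- The principal symbol `P₂(s)` of the FT2S reduction with reduction parameters
`D^u, D̄^u, D, D̄, D^v, D̄^v, D^w, D̄^w`. -/
noncomputable def P2 (s : Fin 3 → ℝ) : Matrix (I2 nu nv nw) (I2 nu nv nw) ℂ :=
  Matrix.of fun r c =>
    match r, c with
    | Sum.inl m, Sum.inl m' => ∑ i, (s i : ℂ) * (Auu i + Du i) m m'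
    | Sum.inl m, Sum.inr (Sum.inl (b, m')) => ∑ i, (s i : ℂ) * Dbaru i b m m'
    | Sum.inl _, Sum.inr (Sum.inr (Sum.inl _)) => 0
    | Sum.inl _, Sum.inr (Sum.inr (Sum.inr _)) => 0
    | Sum.inr (Sum.inl (a, m)), Sum.inl m' =>
        ∑ i, (s i : ℂ) * ((if a = i then Bu1u else 0) + DD a i) m m'
    | Sum.inr (Sum.inl (a, m)), Sum.inr (Sum.inl (b, m')) =>
        ∑ i, (s i : ℂ) * ((if a = i then Auu b else 0) + Dbar a i b) m m'
    | Sum.inr (Sum.inl (a, m)), Sum.inr (Sum.inr (Sum.inl q)) => (s a : ℂ) * Auv m q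
    | Sum.inr (Sum.inl _), Sum.inr (Sum.inr (Sum.inr _)) => 0
    | Sum.inr (Sum.inr (Sum.inl p)), Sum.inl m' =>
        ∑ i, (s i : ℂ) * (Bv1u i + Dv i) p m'
    | Sum.inr (Sum.inr (Sum.inl p)), Sum.inr (Sum.inl (b, m')) =>
        ∑ i, (s i : ℂ) * (Avu i b + Dbarv i b) p m'
    | Sum.inr (Sum.inr (Sum.inl p)), Sum.inr (Sum.inr (Sum.inl q)) =>
        ∑ i, (s i : ℂ) * Avv i p q
    | Sum.inr (Sum.inr (Sum.inl p)), Sum.inr (Sum.inr (Sum.inr t)) => Avw p t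
    | Sum.inr (Sum.inr (Sum.inr t)), Sum.inl m' =>
        ∑ i, ∑ j, (s i : ℂ) * (s j : ℂ) * (Bw1u i j + Dw i j) t m'
    | Sum.inr (Sum.inr (Sum.inr t)), Sum.inr (Sum.inl (b, m')) =>
        ∑ i, ∑ j, (s i : ℂ) * (s j : ℂ) * (Awu i j b + Dbarw i j b) t m'
    | Sum.inr (Sum.inr (Sum.inr t)), Sum.inr (Sum.inr (Sum.inl q)) =>
        ∑ i, ∑ j, (s i : ℂ) * (s j : ℂ) * Awv i j t q
    | Sum.inr (Sum.inr (Sum.inr t)), Sum.inr (Sum.inr (Sum.inr t')) =>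
        ∑ i, (s i : ℂ) * Aww i t t'

/-- The isometric embedding of the components `(s^a d_a, v, w)` into the FT2S state
space (the `u`-slot is zero, the `d`-slot is `d_a = s_a x`); compressing a matrix on the
FT2S state space by this embedding yields its diagonal block corresponding to
`(s^a d_a, v, w)` in the orthogonal change of variables splitting `d_a` into components
parallel and orthogonal to the unit vector `s`. -/
noncomputable def Jcomp (s : Fin 3 → ℝ) : Matrix (I2 nu nv nw) (I3 nu nv nw) ℂ :=
  Matrix.of fun r c =>
    match r, c with
    | Sum.inr (Sum.inl (a, m)), Sum.inl m' => (s a : ℂ) * (if m = m' then 1 else 0)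
    | Sum.inr (Sum.inr (Sum.inl p)), Sum.inr (Sum.inl q) => if p = q then 1 else 0
    | Sum.inr (Sum.inr (Sum.inr t)), Sum.inr (Sum.inr t')  => if t = t' then 1 else 0
    | _, _ => 0

lemma antisym_sum (f : Fin 3 → Fin 3 → ℂ) (h : ∀ i j, f i j = - f j i) :
    ∑ i, ∑ j, f i j = 0 := by
  have h1 : ∑ i, ∑ j, f i j = ∑ i, ∑ j, f j i := by rw [Finset.sum_comm]
  have h2 : ∑ i, ∑ j, f j i = -∑ i, ∑ j, f i j := by
    rw [← Finset.sum_neg_distrib]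
    exact Finset.sum_congr rfl fun i _ => by
      rw [← Finset.sum_neg_distrib]
      exact Finset.sum_congr rfl fun j _ => h j i
  have h3 : ∑ i, ∑ j, f i j = -∑ i, ∑ j, f i j := h1.trans h2
  linear_combination ((1:ℂ)/2) * h3

lemma sum_sq_coe (s : Fin 3 → ℝ) (hs : (∑ i, s i ^ 2) = 1) :
    ∑ i, (s i : ℂ) * (s i : ℂ) = 1 := by
  have := congrArg (Complex.ofReal) hs
  push_cast at this
  simpa [pow_two] using this

lemma Jcomp_isometry (s : Fin 3 → ℝ) (hs : (∑ i, s i ^ 2) = 1) :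
    (Jcomp (nu := nu) (nv := nv) (nw := nw) s)ᴴ * Jcomp (nu := nu) (nv := nv) (nw := nw) s = (1 : Matrix (I3 nu nv nw) (I3 nu nv nw) ℂ) := by
  have hs' := sum_sq_coe s hs
  ext r c
  rcases r with m | (p | t) <;> rcases c with m' | (p' | t') <;>
    simp [Jcomp, Matrix.mul_apply, Fintype.sum_sum_type, Fintype.sum_prod_type,
      Matrix.one_apply, mul_ite, ite_mul, Finset.mul_sum, Finset.sum_mul,
      Finset.sum_ite_eq, Finset.sum_ite_eq', eq_comm, ← Finset.sum_mul, hs',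
      apply_ite (starRingEnd ℂ), Complex.conj_ofReal]

set_option maxHeartbeats 1000000 in
lemma P2_mul_Jcomp
    (hDbaru : ∀ i a, Dbaru i a = -Dbaru a i)
    (hDbar : ∀ a k b, Dbar a k b = -Dbar a b k)
    (hDbarv : ∀ i a, Dbarv i a = -Dbarv a i)
    (hDbarw : ∀ k j a, Dbarw k j a = -Dbarw k a j)
    (s : Fin 3 → ℝ) (hs : (∑ i, s i ^ 2) = 1) :
    P2 Auu Auv Bu1u Avu Avv Avw Bv1u Awu Awv Aww Bw1u Du Dbaru DD Dbar Dv Dbarv Dw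
        Dbarw s * Jcomp (nu := nu) (nv := nv) (nw := nw) s
      = Jcomp (nu := nu) (nv := nv) (nw := nw) s * P3 Auu Auv Avu Avv Avw Awu Awv Aww s := by
  have hs' := sum_sq_coe s hs
  ext r c
  rcases r with m | ⟨⟨a, m⟩ | (p | t)⟩ <;> rcases c with m' | (q | t') <;>
    simp only [P2, P3, Jcomp, Matrix.mul_apply, Fintype.sum_sum_type, Fintype.sum_prod_type,
      Matrix.of_apply, mul_ite, ite_mul, mul_zero, zero_mul, mul_one, one_mul,
      Finset.sum_ite_eq, Finset.sum_ite_eq', Finset.mem_univ, if_true,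
      Finset.sum_const_zero, add_zero, zero_add, Matrix.add_apply]
  case inl.inl =>
    simp_rw [Finset.sum_mul]
    exact antisym_sum _ (fun i j => by
      rw [hDbaru j i]; simp only [Matrix.neg_apply]; ring)
  case inr.inl.inl =>
    have hsplit : ∀ x x1 : Fin 3,
        (s x1 : ℂ) * ((if a = x1 then Auu x else 0) m m' + Dbar a x1 x m m')
          = (if a = x1 then (s x1 : ℂ) * Auu x m m' else 0)
            + (s x1 : ℂ) * Dbar a x1 x m m' := by
      intro x x1
      split
      · ring
      · rw [Matrix.zero_apply, zero_add, zero_add]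
    simp_rw [hsplit, Finset.sum_add_distrib, Finset.sum_ite_eq, Finset.mem_univ,
      if_true, add_mul]
    rw [Finset.sum_add_distrib]
    have hz : ∑ x : Fin 3, (∑ x1 : Fin 3, (s x1 : ℂ) * Dbar a x1 x m m') * (s x : ℂ)
        = 0 := by
      simp_rw [Finset.sum_mul]
      exact antisym_sum _ (fun i j => by
        rw [hDbar a j i]; simp only [Matrix.neg_apply]; ring)
    rw [hz, add_zero, Finset.mul_sum]
    exact Finset.sum_congr rfl fun x _ => by ring
  case inr.inr.inl.inl =>
    simp_rw [mul_add, Finset.sum_add_distrib, add_mul]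
    rw [Finset.sum_add_distrib]
    have hz : ∑ x : Fin 3, (∑ x1 : Fin 3, (s x1 : ℂ) * Dbarv x1 x p m') * (s x : ℂ)
        = 0 := by
      simp_rw [Finset.sum_mul]
      exact antisym_sum _ (fun i j => by
        rw [hDbarv j i]; simp only [Matrix.neg_apply]; ring)
    rw [hz, add_zero]
    simp_rw [Finset.sum_mul]
    rw [Finset.sum_comm]
    exact Finset.sum_congr rfl fun i _ => Finset.sum_congr rfl fun j _ => by ring
  case inr.inr.inr.inl =>
    simp_rw [mul_add, Finset.sum_add_distrib, add_mul]
    rw [Finset.sum_add_distrib]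
    have hz : ∑ x : Fin 3,
        (∑ x1 : Fin 3, ∑ x2 : Fin 3,
          (s x1 : ℂ) * (s x2 : ℂ) * Dbarw x1 x2 x t m') * (s x : ℂ) = 0 := by
      simp_rw [Finset.sum_mul]
      rw [Finset.sum_comm]
      refine Finset.sum_eq_zero fun x1 _ => ?_
      exact antisym_sum _ (fun i j => by
        rw [hDbarw x1 j i]; simp only [Matrix.neg_apply]; ring)
    rw [hz, add_zero]
    simp_rw [Finset.sum_mul]
    rw [Finset.sum_comm]
    refine Finset.sum_congr rfl fun i _ => ?_
    rw [Finset.sum_comm]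
    exact Finset.sum_congr rfl fun j _ => Finset.sum_congr rfl fun k _ => by ring

/-- FT2S strong hyperbolicity implies FT3S strong hyperbolicity.  If for
some choice of reduction parameters there are `M₂ > 0` and Hermitian `H₂(s)` with
`H₂(s)P₂(s) = P₂(s)ᴴH₂(s)` and `M₂⁻¹ I ≤ H₂(s) ≤ M₂ I` for every unit `s`, then the same
holds at third order; one may take `M₃ = M₂` and `H₃(s)` the diagonal block of `H₂(s)`
corresponding to `(s^a d_a, v, w)`. -/
theorem stmt_0
    (hDbaru : ∀ i a, Dbaru i a = -Dbaru a i)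
    (hDbar : ∀ a k b, Dbar a k b = -Dbar a b k)
    (hDbarv : ∀ i a, Dbarv i a = -Dbarv a i)
    (hDbarw : ∀ k j a, Dbarw k j a = -Dbarw k a j)
    (M2 : ℝ) (hM2 : 0 < M2)
    (H2 : (Fin 3 → ℝ) → Matrix (I2 nu nv nw) (I2 nu nv nw) ℂ)
    (hH2 : ∀ s : Fin 3 → ℝ, (∑ i, s i ^ 2) = 1 →
      (H2 s).IsHermitian ∧
      H2 s * P2 Auu Auv Bu1u Avu Avv Avw Bv1u Awu Awv Aww Bw1u Du Dbaru DD Dbar Dv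
          Dbarv Dw Dbarw s
        = (P2 Auu Auv Bu1u Avu Avv Avw Bv1u Awu Awv Aww Bw1u Du Dbaru DD Dbar Dv
            Dbarv Dw Dbarw s)ᴴ * H2 s ∧
      loewnerLE (((M2⁻¹ : ℝ) : ℂ) • 1) (H2 s) ∧
      loewnerLE (H2 s) (((M2 : ℝ) : ℂ) • 1)) :
    (∃ M3 : ℝ, 0 < M3 ∧ ∀ s : Fin 3 → ℝ, (∑ i, s i ^ 2) = 1 →
      ∃ H3 : Matrix (I3 nu nv nw) (I3 nu nv nw) ℂ,
        H3.IsHermitian ∧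
        H3 * P3 Auu Auv Avu Avv Avw Awu Awv Aww s
          = (P3 Auu Auv Avu Avv Avw Awu Awv Aww s)ᴴ * H3 ∧
        loewnerLE (((M3⁻¹ : ℝ) : ℂ) • 1) H3 ∧
        loewnerLE H3 (((M3 : ℝ) : ℂ) • 1)) ∧
    (∀ s : Fin 3 → ℝ, (∑ i, s i ^ 2) = 1 →
      ((Jcomp (nu := nu) (nv := nv) (nw := nw) s)ᴴ * H2 s * Jcomp (nu := nu) (nv := nv) (nw := nw) s : Matrix (I3 nu nv nw) (I3 nu nv nw) ℂ).IsHermitian ∧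
      (Jcomp (nu := nu) (nv := nv) (nw := nw) s)ᴴ * H2 s * Jcomp (nu := nu) (nv := nv) (nw := nw) s * P3 Auu Auv Avu Avv Avw Awu Awv Aww s
        = (P3 Auu Auv Avu Avv Avw Awu Awv Aww s)ᴴ * ((Jcomp (nu := nu) (nv := nv) (nw := nw) s)ᴴ * H2 s * Jcomp (nu := nu) (nv := nv) (nw := nw) s) ∧
      loewnerLE (((M2⁻¹ : ℝ) : ℂ) • 1) ((Jcomp (nu := nu) (nv := nv) (nw := nw) s)ᴴ * H2 s * Jcomp (nu := nu) (nv := nv) (nw := nw) s) ∧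
      loewnerLE ((Jcomp (nu := nu) (nv := nv) (nw := nw) s)ᴴ * H2 s * Jcomp (nu := nu) (nv := nv) (nw := nw) s) (((M2 : ℝ) : ℂ) • 1)) := by
  have key : ∀ s : Fin 3 → ℝ, (∑ i, s i ^ 2) = 1 →
      ((Jcomp (nu := nu) (nv := nv) (nw := nw) s)ᴴ * H2 s * Jcomp (nu := nu) (nv := nv) (nw := nw) s : Matrix (I3 nu nv nw) (I3 nu nv nw) ℂ).IsHermitian ∧
      (Jcomp (nu := nu) (nv := nv) (nw := nw) s)ᴴ * H2 s * Jcomp (nu := nu) (nv := nv) (nw := nw) s * P3 Auu Auv Avu Avv Avw Awu Awv Aww s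
        = (P3 Auu Auv Avu Avv Avw Awu Awv Aww s)ᴴ * ((Jcomp (nu := nu) (nv := nv) (nw := nw) s)ᴴ * H2 s * Jcomp (nu := nu) (nv := nv) (nw := nw) s) ∧
      loewnerLE (((M2⁻¹ : ℝ) : ℂ) • 1) ((Jcomp (nu := nu) (nv := nv) (nw := nw) s)ᴴ * H2 s * Jcomp (nu := nu) (nv := nv) (nw := nw) s) ∧
      loewnerLE ((Jcomp (nu := nu) (nv := nv) (nw := nw) s)ᴴ * H2 s * Jcomp (nu := nu) (nv := nv) (nw := nw) s) (((M2 : ℝ) : ℂ) • 1) := by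
    intro s hs
    obtain ⟨hH, hcomm, hlo, hhi⟩ := hH2 s hs
    have hJJ : (Jcomp (nu := nu) (nv := nv) (nw := nw) s)ᴴ * Jcomp s
        = (1 : Matrix (I3 nu nv nw) (I3 nu nv nw) ℂ) :=
      Jcomp_isometry s hs
    have hPJ := P2_mul_Jcomp Auu Auv Bu1u Avu Avv Avw Bv1u Awu Awv Aww Bw1u Du Dbaru
      DD Dbar Dv Dbarv Dw Dbarw hDbaru hDbar hDbarv hDbarw s hs
    set J := Jcomp (nu := nu) (nv := nv) (nw := nw) s with hJdef
    set H := H2 s with hHdef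
    set Q2 := P2 Auu Auv Bu1u Avu Avv Avw Bv1u Awu Awv Aww Bw1u Du Dbaru DD Dbar Dv
      Dbarv Dw Dbarw s with hQ2def
    set Q3 := P3 Auu Auv Avu Avv Avw Awu Awv Aww s with hQ3def
    refine ⟨?_, ?_, ?_, ?_⟩
    · show (Jᴴ * H * J)ᴴ = Jᴴ * H * J
      calc (Jᴴ * H * J)ᴴ = Jᴴ * Hᴴ * J := by
            rw [Matrix.conjTranspose_mul, Matrix.conjTranspose_mul,
              Matrix.conjTranspose_conjTranspose, Matrix.mul_assoc]
        _ = Jᴴ * H * J := by rw [hH.eq]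
    · have h1 : J * Q3 = Q2 * J := hPJ.symm
      simp only [Matrix.mul_assoc]
      rw [h1, ← Matrix.mul_assoc H Q2 J, hcomm, Matrix.mul_assoc Q2ᴴ H J,
        ← Matrix.mul_assoc Jᴴ Q2ᴴ (H * J), ← Matrix.conjTranspose_mul Q2 J, ← h1,
        Matrix.conjTranspose_mul J Q3, Matrix.mul_assoc Q3ᴴ Jᴴ (H * J)]
    · have hlo' : (H - ((M2⁻¹ : ℝ) : ℂ) • 1).PosSemidef := hlo
      have heq : Jᴴ * (H - ((M2⁻¹ : ℝ) : ℂ) • (1 : Matrix (I2 nu nv nw) (I2 nu nv nw) ℂ)) * J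
          = Jᴴ * H * J - ((M2⁻¹ : ℝ) : ℂ) • (1 : Matrix (I3 nu nv nw) (I3 nu nv nw) ℂ) := by
        rw [Matrix.mul_sub, Matrix.sub_mul, Matrix.mul_smul, Matrix.mul_one,
          Matrix.smul_mul, show Jᴴ * J = 1 from hJJ]
      show (Jᴴ * H * J - ((M2⁻¹ : ℝ) : ℂ) • 1).PosSemidef
      rw [← heq]
      exact hlo'.conjTranspose_mul_mul_same J
    · have hhi' : (((M2 : ℝ) : ℂ) • 1 - H).PosSemidef := hhi
      have heq : Jᴴ * (((M2 : ℝ) : ℂ) • (1 : Matrix (I2 nu nv nw) (I2 nu nv nw) ℂ) - H) * J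
          = ((M2 : ℝ) : ℂ) • (1 : Matrix (I3 nu nv nw) (I3 nu nv nw) ℂ) - Jᴴ * H * J := by
        rw [Matrix.mul_sub, Matrix.sub_mul, Matrix.mul_smul, Matrix.mul_one,
          Matrix.smul_mul, show Jᴴ * J = 1 from hJJ]
      show (((M2 : ℝ) : ℂ) • 1 - Jᴴ * H * J).PosSemidef
      rw [← heq]
      exact hhi'.conjTranspose_mul_mul_same J
  exact ⟨⟨M2, hM2, fun s hs => ⟨(Jcomp s)ᴴ * H2 s * Jcomp s, key s hs⟩⟩, key⟩
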